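/- Let ρ be a bipartite unnormalized density matrix (positive semidefinite on ℂ^N ⊗ ℂ^N). Then QP(ρ) = ⟨ρ^{⊗N} Z, Z⟩ where Z is the tensor with entries Z(j₁^{(1)},j₂^{(1)};…;j₁^{(N)},j₂^{(N)}) = (1/√N!)·sgn(τ₁)sgn(τ₂) if j_k^{(i)} = τ_k(i) for some permutations τ₁,τ₂ ∈ S_N, and 0 otherwise. Consequently, if ρ₁ ⪰ ρ₂ ⪰ 0 then QP(ρ₁) ≥ QP(ρ₂) ≥ 0. -/

import Mathlib

open Matrix Equiv
open scoped ComplexOrder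

/-- The quantum permanent of a matrix on `ℂ^N ⊗ ℂ^N`:
`QP(ρ) = Σ_{τ₁,τ₂,τ₃ ∈ S_N} sgn(τ₁)sgn(τ₂)sgn(τ₃) Π_i ρ(i,τ₁(i); τ₂(i),τ₃(i))`. -/
noncomputable def QP {N : ℕ} (ρ : Matrix (Fin N × Fin N) (Fin N × Fin N) ℂ) : ℂ :=
  ∑ τ₁ : Perm (Fin N), ∑ τ₂ : Perm (Fin N), ∑ τ₃ : Perm (Fin N),
    ((Perm.sign τ₁ : ℤ) * (Perm.sign τ₂ : ℤ) * (Perm.sign τ₃ : ℤ) : ℂ) *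
      ∏ i : Fin N, ρ (i, τ₁ i) (τ₂ i, τ₃ i)

/-- The `N`-fold tensor (Kronecker) power of a matrix on `ℂ^N ⊗ ℂ^N`. -/
noncomputable def tensorPow {N : ℕ} (ρ : Matrix (Fin N × Fin N) (Fin N × Fin N) ℂ) :
    Matrix (Fin N → Fin N × Fin N) (Fin N → Fin N × Fin N) ℂ :=
  fun f g => ∏ i : Fin N, ρ (f i) (g i)

/-- The vector `Z`:  `Z(j₁^{(1)},j₂^{(1)};…;j₁^{(N)},j₂^{(N)}) = (1/√N!)·sgn(τ₁)sgn(τ₂)`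
if `j_k^{(i)} = τ_k(i)` for permutations `τ₁, τ₂ ∈ S_N`, and `0` otherwise.
(The permutations, when they exist, are unique, so the inner sum has at most one
nonzero term.) -/
noncomputable def Zvec (N : ℕ) : (Fin N → Fin N × Fin N) → ℂ :=
  fun f => ((Real.sqrt (N.factorial))⁻¹ : ℝ) *
    ∑ τ₁ : Perm (Fin N), ∑ τ₂ : Perm (Fin N),
      if f = fun i => (τ₁ i, τ₂ i) then ((Perm.sign τ₁ : ℤ) * (Perm.sign τ₂ : ℤ) : ℂ) else 0

/-- A "mixed tensor product" of positive semidefinite matrices is positive semidefinite. -/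
lemma mixed_psd {N : ℕ} (A : Fin N → Matrix (Fin N × Fin N) (Fin N × Fin N) ℂ)
    (h : ∀ i, (A i).PosSemidef) :
    (Matrix.of fun f g : Fin N → Fin N × Fin N => ∏ i, A i (f i) (g i)).PosSemidef := by
  choose B hB using fun i => (by open scoped MatrixOrder in exact CStarAlgebra.nonneg_iff_eq_star_mul_self.mp (h i).nonneg)
  have : (Matrix.of fun f g : Fin N → Fin N × Fin N => ∏ i, A i (f i) (g i)) =
      (Matrix.of fun (h' f : Fin N → Fin N × Fin N) => ∏ i, B i (h' i) (f i))ᴴ *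
      (Matrix.of fun (h' f : Fin N → Fin N × Fin N) => ∏ i, B i (h' i) (f i)) := by
    ext f g
    simp only [Matrix.mul_apply, Matrix.conjTranspose_apply, Matrix.of_apply]
    have : ∀ i, A i (f i) (g i) = ∑ k, star (B i k (f i)) * B i k (g i) := by
      intro i; rw [hB i]; simp [Matrix.mul_apply, Matrix.conjTranspose_apply]
    simp_rw [this, Finset.prod_univ_sum, Fintype.piFinset_univ, star_prod,
      Finset.prod_mul_distrib]
  rw [this]
  exact Matrix.posSemidef_conjTranspose_mul_self _

lemma Zvec_real {N : ℕ} (f : Fin N → Fin N × Fin N) :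
    (starRingEnd ℂ) (Zvec N f) = Zvec N f := by
  simp only [Zvec, _root_.map_mul, map_sum, Complex.conj_ofReal, apply_ite, map_intCast, map_zero]

lemma Zvec_sum {N : ℕ} (φ : (Fin N → Fin N × Fin N) → ℂ) :
    ∑ f, Zvec N f * φ f = ((Real.sqrt (N.factorial))⁻¹ : ℝ) *
      ∑ σ₁ : Perm (Fin N), ∑ σ₂ : Perm (Fin N),
        ((Perm.sign σ₁ : ℤ) * (Perm.sign σ₂ : ℤ) : ℂ) * φ (fun i => (σ₁ i, σ₂ i)) := by
  simp only [Zvec, Finset.sum_mul, Finset.mul_sum, ite_mul, zero_mul, mul_assoc]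
  rw [Finset.sum_comm]
  congr 1; ext σ₁
  rw [Finset.sum_comm]
  congr 1; ext σ₂
  rw [← Finset.mul_sum, Finset.sum_ite_eq' Finset.univ (fun i => (σ₁ i, σ₂ i))
    (fun f => ((Perm.sign σ₁ : ℤ) : ℂ) * (((Perm.sign σ₂ : ℤ) : ℂ) * φ f))]
  simp [mul_assoc]

/-- The quantum permanent as a quadratic form: `QP ρ = ⟨ρ^{⊗N} Z, Z⟩`. -/
lemma qp_eq {N : ℕ} (ρ : Matrix (Fin N × Fin N) (Fin N × Fin N) ℂ) :
    QP ρ = ∑ f : Fin N → Fin N × Fin N,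
      ((tensorPow ρ).mulVec (Zvec N) f) * (starRingEnd ℂ) (Zvec N f) := by
  set c : ℂ := (((Real.sqrt (N.factorial))⁻¹ : ℝ) : ℂ) with hcdef
  have hc1 : c * c * (N.factorial : ℂ) = 1 := by
    have hs : Real.sqrt (N.factorial) ≠ 0 :=
      ne_of_gt (Real.sqrt_pos.mpr (by exact_mod_cast N.factorial_pos))
    have h1 : (Real.sqrt N.factorial)⁻¹ * (Real.sqrt N.factorial)⁻¹ * (N.factorial : ℝ) = 1 := by
      rw [← Real.mul_self_sqrt (by positivity : (0:ℝ) ≤ (N.factorial : ℝ))]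
      field_simp
      rw [Real.sqrt_sq (Real.sqrt_nonneg _)]
    rw [hcdef]
    exact_mod_cast congrArg (fun r : ℝ => (r : ℂ)) h1
  have hmv : ∀ f, (tensorPow ρ).mulVec (Zvec N) f
      = c * ∑ σ₁ : Perm (Fin N), ∑ σ₂ : Perm (Fin N),
          ((Perm.sign σ₁ : ℤ) * (Perm.sign σ₂ : ℤ) : ℂ) * ∏ i, ρ (f i) (σ₁ i, σ₂ i) := by
    intro f
    have h : (tensorPow ρ).mulVec (Zvec N) f = ∑ g, Zvec N g * (∏ i, ρ (f i) (g i)) := by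
      simp [Matrix.mulVec, dotProduct, tensorPow, mul_comm]
    rw [h]
    exact Zvec_sum (fun g => ∏ i, ρ (f i) (g i))
  have key : ∀ τ₁ : Perm (Fin N), (∑ τ₂ : Perm (Fin N), ∑ σ₁ : Perm (Fin N), ∑ σ₂ : Perm (Fin N),
      (((Perm.sign τ₁ : ℤ) : ℂ) * ((Perm.sign τ₂ : ℤ) : ℂ)) *
        ((((Perm.sign σ₁ : ℤ) : ℂ) * ((Perm.sign σ₂ : ℤ) : ℂ)) *
          ∏ i, ρ (τ₁ i, τ₂ i) (σ₁ i, σ₂ i)) ) = QP ρ := by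
    intro τ₁
    have hx : ((Perm.sign τ₁ : ℤ) : ℂ) * ((Perm.sign τ₁ : ℤ) : ℂ) = 1 := by
      norm_cast
      rw [Int.units_mul_self]
      simp
    symm
    rw [QP]
    refine Fintype.sum_bijective (· * τ₁) (Group.mulRight_bijective τ₁) _ _ fun a => ?_
    refine Fintype.sum_bijective (· * τ₁) (Group.mulRight_bijective τ₁) _ _ fun b => ?_
    refine Fintype.sum_bijective (· * τ₁) (Group.mulRight_bijective τ₁) _ _ fun d => ?_
    have hp : ∏ i, ρ (i, a i) (b i, d i) = ∏ i, ρ (τ₁ i, a (τ₁ i)) (b (τ₁ i), d (τ₁ i)) :=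
      (Equiv.prod_comp τ₁ fun i => ρ (i, a i) (b i, d i)).symm
    simp only [Perm.coe_mul, Function.comp_apply, Perm.sign_mul, Units.val_mul, Int.cast_mul]
    rw [hp]
    set x : ℂ := ((Perm.sign τ₁ : ℤ) : ℂ)
    set A : ℂ := ((Perm.sign a : ℤ) : ℂ)
    set B : ℂ := ((Perm.sign b : ℤ) : ℂ)
    set D : ℂ := ((Perm.sign d : ℤ) : ℂ)
    set P : ℂ := ∏ i, ρ (τ₁ i, a (τ₁ i)) (b (τ₁ i), d (τ₁ i))
    linear_combination (-(A * B * D * P) * (x * x + 1)) * hx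
  calc QP ρ = c * c * (N.factorial : ℂ) * QP ρ := by rw [hc1, one_mul]
    _ = c * ∑ τ₁ : Perm (Fin N), (c * QP ρ) := by
        rw [Finset.sum_const, Finset.card_univ, Fintype.card_perm, Fintype.card_fin,
          nsmul_eq_mul]
        ring
    _ = c * ∑ τ₁ : Perm (Fin N), ∑ τ₂ : Perm (Fin N),
          ((Perm.sign τ₁ : ℤ) * (Perm.sign τ₂ : ℤ) : ℂ) *
            ((tensorPow ρ).mulVec (Zvec N) (fun i => (τ₁ i, τ₂ i))) := by
        congr 1
        refine Finset.sum_congr rfl fun τ₁ _ => ?_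
        rw [← key τ₁]
        simp only [hmv, Finset.mul_sum]
        refine Finset.sum_congr rfl fun τ₂ _ => Finset.sum_congr rfl fun σ₁ _ =>
          Finset.sum_congr rfl fun σ₂ _ => by ring
    _ = ∑ f, Zvec N f * ((tensorPow ρ).mulVec (Zvec N) f) :=
        (Zvec_sum ((tensorPow ρ).mulVec (Zvec N))).symm
    _ = ∑ f, ((tensorPow ρ).mulVec (Zvec N) f) * (starRingEnd ℂ) (Zvec N f) := by
        refine Finset.sum_congr rfl fun f _ => ?_
        rw [Zvec_real, mul_comm]

lemma qform_nonneg {N : ℕ} (M : Matrix (Fin N → Fin N × Fin N) (Fin N → Fin N × Fin N) ℂ)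
    (hM : M.PosSemidef) :
    0 ≤ ∑ f, M.mulVec (Zvec N) f * (starRingEnd ℂ) (Zvec N f) := by
  have heq : ∑ f, M.mulVec (Zvec N) f * (starRingEnd ℂ) (Zvec N f)
      = star (Zvec N) ⬝ᵥ M.mulVec (Zvec N) := by
    rw [dotProduct]
    refine Finset.sum_congr rfl fun f _ => ?_
    rw [Pi.star_apply, starRingEnd_apply, mul_comm]
  rw [heq]
  exact hM.dotProduct_mulVec_nonneg _

lemma qform_expand {N : ℕ} (M : Matrix (Fin N → Fin N × Fin N) (Fin N → Fin N × Fin N) ℂ) :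
    ∑ f, M.mulVec (Zvec N) f * (starRingEnd ℂ) (Zvec N f)
      = ∑ f, ∑ g, M f g * Zvec N g * (starRingEnd ℂ) (Zvec N f) := by
  simp [Matrix.mulVec, dotProduct, Finset.sum_mul]

theorem QP_inner_product_and_monotone {N : ℕ} :
    (∀ ρ : Matrix (Fin N × Fin N) (Fin N × Fin N) ℂ, ρ.PosSemidef →
      QP ρ = ∑ f : Fin N → Fin N × Fin N,
        ((tensorPow ρ).mulVec (Zvec N) f) * (starRingEnd ℂ) (Zvec N f)) ∧
    (∀ ρ₁ ρ₂ : Matrix (Fin N × Fin N) (Fin N × Fin N) ℂ,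
      (ρ₁ - ρ₂).PosSemidef → ρ₂.PosSemidef → 0 ≤ QP ρ₂ ∧ QP ρ₂ ≤ QP ρ₁) := by
  constructor
  · intro ρ _
    exact qp_eq ρ
  · intro ρ₁ ρ₂ hd h2
    set Msum : Finset (Fin N) → Matrix (Fin N → Fin N × Fin N) (Fin N → Fin N × Fin N) ℂ :=
      fun S => Matrix.of fun f g => ∏ i, (if i ∈ S then ρ₁ - ρ₂ else ρ₂) (f i) (g i) with hMdef
    have hpsd : ∀ S, (Msum S).PosSemidef := by
      intro S
      refine mixed_psd _ fun i => ?_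
      split
      · exact hd
      · exact h2
    have hE : Msum ∅ = tensorPow ρ₂ := by
      ext f g
      simp [hMdef, tensorPow]
    have hsplit : ∀ f g, tensorPow ρ₁ f g = ∑ S ∈ Finset.univ.powerset, Msum S f g := by
      intro f g
      have h0 : tensorPow ρ₁ f g = ∏ i, ((ρ₁ - ρ₂) (f i) (g i) + ρ₂ (f i) (g i)) := by
        refine Finset.prod_congr rfl fun i _ => ?_
        simp [tensorPow, Matrix.sub_apply]
      rw [show tensorPow ρ₁ f g = ∏ i, ρ₁ (f i) (g i) from rfl] at h0 ⊢
      rw [h0, Finset.prod_add]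
      refine Finset.sum_congr rfl fun S _ => ?_
      have h : ∀ i, (if i ∈ S then ρ₁ - ρ₂ else ρ₂) (f i) (g i)
          = if i ∈ S then (ρ₁ - ρ₂) (f i) (g i) else ρ₂ (f i) (g i) := fun i => by
        split <;> rfl
      simp only [hMdef, Matrix.of_apply]
      simp_rw [h]
      rw [Finset.prod_ite, Finset.filter_univ_mem, Finset.filter_not, Finset.filter_univ_mem]
    have hQ1 : QP ρ₁ = ∑ S ∈ Finset.univ.powerset,
        ∑ f, (Msum S).mulVec (Zvec N) f * (starRingEnd ℂ) (Zvec N f) := by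
      rw [qp_eq, qform_expand]
      calc ∑ f, ∑ g, tensorPow ρ₁ f g * Zvec N g * (starRingEnd ℂ) (Zvec N f)
          = ∑ f, ∑ S ∈ Finset.univ.powerset,
              ∑ g, Msum S f g * Zvec N g * (starRingEnd ℂ) (Zvec N f) := by
            refine Finset.sum_congr rfl fun f _ => ?_
            rw [← Finset.sum_comm]
            refine Finset.sum_congr rfl fun g _ => ?_
            rw [hsplit f g, Finset.sum_mul, Finset.sum_mul]
        _ = ∑ S ∈ Finset.univ.powerset,
              ∑ f, ∑ g, Msum S f g * Zvec N g * (starRingEnd ℂ) (Zvec N f) := Finset.sum_comm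
        _ = ∑ S ∈ Finset.univ.powerset,
              ∑ f, (Msum S).mulVec (Zvec N) f * (starRingEnd ℂ) (Zvec N f) :=
            Finset.sum_congr rfl fun S _ => (qform_expand (Msum S)).symm
    have hQ2 : QP ρ₂ = ∑ f, (Msum ∅).mulVec (Zvec N) f * (starRingEnd ℂ) (Zvec N f) := by
      rw [qp_eq, hE]
    constructor
    · rw [hQ2]
      exact qform_nonneg _ (hpsd ∅)
    · rw [hQ1, hQ2]
      exact Finset.single_le_sum (fun S _ => qform_nonneg _ (hpsd S))
        (Finset.empty_mem_powerset _)
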